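/- For all integers n ≥ 1 and e with n − 1 ≤ e ≤ n(n − 1)/2, there exists a connected simple graph on n vertices with e edges whose degree sequence consists of exactly r vertices of degree k + 1 and n − r vertices of degree k, where 2e = nk + r with 0 ≤ r ≤ n − 1 (Euclidean division). In particular, every such almost regular degree sequence is realized by a connected simple graph. -/

import Mathlib

open Finset

namespace AlmostReg

/-- offsets finset for vertex value `v`. -/
def offs (n m t h : ℕ) (μ : Bool) (v : ℕ) : Finset ℕ :=
  (Finset.Ico 1 (m+1)) ∪ (Finset.Ico (n-m) n) ∪ (if μ then {n/2} else ∅)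
  ∪ (if v < t then {h} else ∅) ∪ (if (v + (n-h)) % n < t then {n-h} else ∅)

lemma mem_offs {n m t h : ℕ} {μ : Bool} {v o : ℕ} :
    o ∈ offs n m t h μ v ↔ (1 ≤ o ∧ o ≤ m) ∨ (n - m ≤ o ∧ o < n) ∨ (μ = true ∧ o = n/2)
      ∨ (v < t ∧ o = h) ∨ ((v + (n-h)) % n < t ∧ o = n - h) := by
  unfold offs
  split_ifs <;> simp_all [Nat.lt_succ_iff] <;> omega

lemma mod_sub (n u v : ℕ) (hu : u < n) (hv : v < n) :
    (v + (n - u)) % n = if u ≤ v then v - u else v + (n - u) := by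
  split_ifs with huv
  · have h : v + (n - u) = (v - u) + n := by omega
    rw [h, Nat.add_mod_right, Nat.mod_eq_of_lt (by omega)]
  · exact Nat.mod_eq_of_lt (by omega)

lemma card_shift (n h t : ℕ) (hh : h < n) (ht : t ≤ n) :
    (((range n)).filter (fun v => (v + (n - h)) % n < t)).card = t := by
  rw [← Finset.card_range t]
  apply Finset.card_bij' (fun v _ => (v + (n - h)) % n) (fun i _ => (i + h) % n)
  · intro a ha
    simp only [mem_filter] at ha
    simpa [Finset.card_range] using ha.2
  · intro i hi
    simp only [mem_range, Finset.card_range] at hi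
    have hin : i < n := lt_of_lt_of_le hi ht
    simp only [mem_filter, mem_range]
    constructor
    · exact Nat.mod_lt _ (by omega)
    · rw [Nat.mod_add_mod]
      have : i + h + (n - h) = i + n := by omega
      rw [this, Nat.add_mod_right, Nat.mod_eq_of_lt hin]
      simpa [Finset.card_range] using hi
  · intro a ha
    simp only [mem_filter, mem_range] at ha
    rw [Nat.mod_add_mod]
    have : a + (n - h) + h = a + n := by omega
    rw [this, Nat.add_mod_right, Nat.mod_eq_of_lt ha.1]
  · intro i hi
    simp only [mem_range, Finset.card_range] at hi
    have hin : i < n := lt_of_lt_of_le hi ht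
    rw [Nat.mod_add_mod]
    have : i + h + (n - h) = i + n := by omega
    rw [this, Nat.add_mod_right, Nat.mod_eq_of_lt hin]

lemma card_filter_val (n : ℕ) (p : ℕ → Prop) [DecidablePred p] :
    ((Finset.univ.filter (fun v : Fin n => p v.val))).card
      = ((range n).filter p).card := by
  apply Finset.card_bij (fun v _ => v.val)
  · intro a ha; simp only [mem_filter, mem_range, Fin.is_lt, true_and]
    simpa using ha
  · intro a _ b _ hab; exact Fin.ext hab
  · intro b hb
    simp only [mem_filter, mem_range] at hb
    exact ⟨⟨b, hb.1⟩, by simp [hb.2], rfl⟩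


lemma mod_neg (n a b : ℕ) (ha : a < n) (hb : b < n) (hab : a ≠ b) :
    (a + (n - b)) % n = n - ((b + (n - a)) % n) := by
  rw [mod_sub n b a hb ha, mod_sub n a b ha hb]
  split_ifs <;> omega

lemma mod_inv (n a b g : ℕ) (ha : a < n) (hb : b < n) (hg : g < n)
    (heq : (b + (n - a)) % n = g) : (b + (n - g)) % n = a := by
  rw [mod_sub n a b ha hb] at heq
  rw [mod_sub n g b hg hb]
  split_ifs at * <;> omega

lemma mod_add_small (n u o : ℕ) (hu : u < n) (ho : o < n) :
    (u + o) % n = if u + o < n then u + o else u + o - n := by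
  split_ifs with hc
  · exact Nat.mod_eq_of_lt hc
  · have h : u + o = (u + o - n) + n := by omega
    calc (u + o) % n = ((u + o - n) + n) % n := by rw [← h]
      _ = (u + o - n) % n := Nat.add_mod_right _ _
      _ = u + o - n := Nat.mod_eq_of_lt (by omega)

def adj (n m t h : ℕ) (μ : Bool) (u v : Fin n) : Prop :=
  u ≠ v ∧ (v.val + (n - u.val)) % n ∈ offs n m t h μ u.val

instance (n m t h : ℕ) (μ : Bool) : DecidableRel (adj n m t h μ) :=
  fun _ _ => instDecidableAnd

variable {n m t h : ℕ} {μ : Bool}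

lemma adj_symm (hm : 2*m < n) (hμ : μ = true → n % 2 = 0) (hh1 : 1 ≤ h) (hh2 : h < n) :
    Symmetric (adj n m t h μ) := by
  rintro u v ⟨hne, hmem⟩
  refine ⟨hne.symm, ?_⟩
  have ha : u.val < n := u.isLt
  have hb : v.val < n := v.isLt
  have hab : u.val ≠ v.val := fun hh => hne (Fin.ext hh)
  have hneg := mod_neg n u.val v.val ha hb hab
  rw [mem_offs] at hmem ⊢
  have hlt : (v.val + (n - u.val)) % n < n := Nat.mod_lt _ (by omega)
  rcases hmem with ⟨h1,h2⟩|⟨h1,h2⟩|⟨h1,h2⟩|⟨h1,h2⟩|⟨h1,h2⟩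
  · exact Or.inr (Or.inl (by omega))
  · exact Or.inl (by omega)
  · refine Or.inr (Or.inr (Or.inl ⟨h1, ?_⟩))
    have := hμ h1
    omega
  · refine Or.inr (Or.inr (Or.inr (Or.inr ⟨?_, by omega⟩)))
    have := mod_inv n u.val v.val h ha hb hh2 h2
    omega
  · refine Or.inr (Or.inr (Or.inr (Or.inl ⟨?_, by omega⟩)))
    have h2' : (u.val + (n - v.val)) % n = h := by omega
    have := mod_inv n v.val u.val h hb ha hh2 h2'
    omega

lemma adj_loopless : ∀ u : Fin n, ¬ adj n m t h μ u u := fun u hu => hu.1 rfl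

def graph (n m t h : ℕ) (μ : Bool) (hm : 2*m < n) (hμ : μ = true → n % 2 = 0)
    (hh1 : 1 ≤ h) (hh2 : h < n) : SimpleGraph (Fin n) where
  Adj := adj n m t h μ
  symm := ⟨adj_symm hm hμ hh1 hh2⟩
  loopless := ⟨adj_loopless⟩

instance (n m t h : ℕ) (μ : Bool) (hm : 2*m < n) (hμ : μ = true → n % 2 = 0)
    (hh1 : 1 ≤ h) (hh2 : h < n) : DecidableRel (graph n m t h μ hm hμ hh1 hh2).Adj :=
  fun _ _ => instDecidableAnd

lemma offs_sub (hm : 2*m < n) (hh1 : 1 ≤ h) (hh2 : h < n) (hμn : μ = true → 2 ≤ n)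
    {v o : ℕ} (ho : o ∈ offs n m t h μ v) : 1 ≤ o ∧ o < n := by
  rw [mem_offs] at ho
  rcases ho with ⟨h1,h2⟩|⟨h1,h2⟩|⟨h1,h2⟩|⟨h1,h2⟩|⟨h1,h2⟩ <;>
    first
    | omega
    | (have := hμn h1; omega)

lemma card_neighborFinset (hm : 2*m < n) (hμ : μ = true → n % 2 = 0)
    (hh1 : 1 ≤ h) (hh2 : h < n) (hμn : μ = true → 2 ≤ n) (u : Fin n) :
    ((graph n m t h μ hm hμ hh1 hh2).neighborFinset u).card = (offs n m t h μ u.val).card := by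
  have ha : u.val < n := u.isLt
  rw [SimpleGraph.neighborFinset_eq_filter]
  refine Finset.card_bij'
    (fun v _ => (v.val + (n - u.val)) % n)
    (fun o ho => (⟨(u.val + o) % n, Nat.mod_lt _ (by omega)⟩ : Fin n))
    ?hi ?hj ?left ?right
  case hi =>
    intro v hv
    rw [Finset.mem_filter] at hv
    exact hv.2.2
  case hj =>
    intro o ho
    have hoo := offs_sub hm hh1 hh2 hμn ho
    simp only [Finset.mem_filter, Finset.mem_univ, true_and]
    constructor
    · intro hcon
      have : (u.val + o) % n = u.val := congrArg Fin.val hcon.symm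
      rw [mod_add_small n u.val o ha (by omega)] at this
      split_ifs at this <;> omega
    · show ((u.val + o) % n + (n - u.val)) % n ∈ _
      rw [Nat.mod_add_mod]
      have he : u.val + o + (n - u.val) = o + n := by omega
      rw [he, Nat.add_mod_right, Nat.mod_eq_of_lt (by omega)]
      exact ho
  case right =>
    intro o ho
    have hoo := offs_sub hm hh1 hh2 hμn ho
    show ((u.val + o) % n + (n - u.val)) % n = o
    rw [Nat.mod_add_mod]
    have he : u.val + o + (n - u.val) = o + n := by omega
    rw [he, Nat.add_mod_right, Nat.mod_eq_of_lt (by omega)]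
  case left =>
    intro v hv
    apply Fin.ext
    show (u.val + (v.val + (n - u.val)) % n) % n = v.val
    rw [Nat.add_mod_mod]
    have he : u.val + (v.val + (n - u.val)) = v.val + n := by omega
    rw [he, Nat.add_mod_right, Nat.mod_eq_of_lt v.isLt]

lemma ncard_neighbor (hm : 2*m < n) (hμ : μ = true → n % 2 = 0)
    (hh1 : 1 ≤ h) (hh2 : h < n) (hμn : μ = true → 2 ≤ n) (u : Fin n) :
    ((graph n m t h μ hm hμ hh1 hh2).neighborSet u).ncard = (offs n m t h μ u.val).card := by
  rw [← card_neighborFinset hm hμ hh1 hh2 hμn u, Set.ncard_eq_toFinset_card']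
  rfl

lemma graph_connected (hm : 2*m < n) (hμ : μ = true → n % 2 = 0)
    (hh1 : 1 ≤ h) (hh2 : h < n) (hn : 1 ≤ n)
    (hone : ∀ v : ℕ, v + 1 < n → 1 ∈ offs n m t h μ v) :
    (graph n m t h μ hm hμ hh1 hh2).Connected := by
  rw [SimpleGraph.connected_iff]
  have hz : (0 : ℕ) < n := hn
  refine ⟨?_, ⟨⟨0, hz⟩⟩⟩
  have key : ∀ j (hj : j < n), (graph n m t h μ hm hμ hh1 hh2).Reachable ⟨0, hz⟩ ⟨j, hj⟩ := by
    intro j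
    induction j with
    | zero => intro hj; rfl
    | succ i ih =>
      intro hj
      refine (ih (by omega)).trans (SimpleGraph.Adj.reachable ?_)
      refine ⟨by simp [Fin.ext_iff], ?_⟩
      show ((i+1) + (n - i)) % n ∈ _
      have he : (i+1) + (n - i) = 1 + n := by omega
      rw [he, Nat.add_mod_right, Nat.mod_eq_of_lt (by omega)]
      exact hone i hj
  intro u v
  exact (key u.1 u.2).symm.trans (key v.1 v.2)


lemma card_offs (hm : 2*m < n) (hh1 : 1 ≤ h) (hh2 : h < n)
    (Hd1 : 0 < t → m < h ∧ h < n - m)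
    (Hd2 : μ = true → n % 2 = 0 ∧ 2 ≤ n ∧ (0 < t → h ≠ n/2 ∧ n - h ≠ n/2))
    (Hd3 : 2*h = n → t ≤ h ∧ h + t ≤ n ∧ μ = false)
    (v : ℕ) (hv : v < n) :
    (offs n m t h μ v).card = 2*m + (if μ then 1 else 0) + (if v < t then 1 else 0)
      + (if (v + (n-h)) % n < t then 1 else 0) := by
  have hbv := mod_sub n h v hh2 hv
  have hnb : ¬ (2*h = n ∧ v < t ∧ (v + (n-h)) % n < t) := by
    rintro ⟨e1, e2, e3⟩
    obtain ⟨d1, d2, -⟩ := Hd3 e1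
    rw [hbv] at e3
    split_ifs at e3 <;> omega
  unfold offs
  rcases Nat.lt_or_ge v t with hav|hav <;>
    rcases Nat.lt_or_ge ((v + (n-h)) % n) t with hb2|hb2 <;>
    cases μ <;>
    simp only [if_pos, if_neg, hav, hb2, if_true, if_false, Bool.false_eq_true,
      Bool.true_eq_false, ite_true, ite_false, Finset.union_empty, not_lt.mpr,
      reduceIte] <;>
  [skip; skip; skip; skip; skip; skip; skip; skip]
  all_goals (
    (try have d1 := Hd1 (by omega));
    (try have d2 := Hd2 rfl);
    (try have d2' := d2.2.2 (by omega));
    (try have hne2 : 2*h ≠ n := by intro ee; exact hnb ⟨ee, by omega, by omega⟩);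
    (repeat rw [Finset.card_union_of_disjoint (by
      simp only [Finset.disjoint_left, Finset.mem_union, Finset.mem_Ico,
        Finset.mem_singleton]
      intro a h1 h2
      omega)]);
    simp [Nat.card_Ico];
    omega)


lemma filter_lt_card (n t : ℕ) (ht : t ≤ n) :
    ((range n).filter (fun v => v < t)).card = t := by
  have : (range n).filter (fun v => v < t) = range t := by
    ext a; simp only [Finset.mem_filter, Finset.mem_range]; omega
  rw [this, Finset.card_range]

lemma sum_card_offs (hm : 2*m < n) (hh1 : 1 ≤ h) (hh2 : h < n)
    (Hd1 : 0 < t → m < h ∧ h < n - m)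
    (Hd2 : μ = true → n % 2 = 0 ∧ 2 ≤ n ∧ (0 < t → h ≠ n/2 ∧ n - h ≠ n/2))
    (Hd3 : 2*h = n → t ≤ h ∧ h + t ≤ n ∧ μ = false) (ht : t ≤ n) :
    ∑ v : Fin n, (offs n m t h μ v.val).card
      = n * (2*m + (if μ then 1 else 0)) + t + t := by
  have hsum : ∑ v : Fin n, (offs n m t h μ v.val).card
      = ∑ v : Fin n, (2*m + (if μ then 1 else 0) + (if v.val < t then 1 else 0)
        + (if (v.val + (n-h)) % n < t then 1 else 0)) :=
    Finset.sum_congr rfl (fun v _ => card_offs hm hh1 hh2 Hd1 Hd2 Hd3 v.val v.isLt)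
  rw [hsum]
  rw [Finset.sum_add_distrib, Finset.sum_add_distrib, Finset.sum_const,
    Finset.sum_boole, Finset.sum_boole]
  simp only [Nat.cast_id, smul_eq_mul, Finset.card_univ, Fintype.card_fin]
  have c1 : (Finset.univ.filter (fun x : Fin n => x.val < t)).card = t := by
    exact (card_filter_val n (fun w => w < t)).trans (filter_lt_card n t ht)
  have c2 : (Finset.univ.filter (fun x : Fin n => (x.val + (n-h)) % n < t)).card = t := by
    exact (card_filter_val n (fun w => (w + (n-h)) % n < t)).trans (card_shift n h t hh2 ht)
  rw [c1, c2]


lemma bv_char (hh2 : h < n) {v : ℕ} (hv : v < n) :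
    ((v + (n-h)) % n < t) ↔ ((h ≤ v ∧ v < h + t) ∨ (v < h ∧ v + n < h + t)) := by
  rw [mod_sub n h v hh2 hv]
  split_ifs <;> omega

lemma count_disjoint (hh2 : h < n) (hth : t ≤ h) (hht : h + t ≤ n) :
    ((range n).filter (fun v => v < t ∨ (v + (n-h)) % n < t)).card = 2*t
    ∧ ∀ v < n, ¬(v < t ∧ (v + (n-h)) % n < t) := by
  constructor
  · have hcongr : (range n).filter (fun v => v < t ∨ (v + (n-h)) % n < t)
        = (range n).filter
          (fun v => v < t ∨ ((h ≤ v ∧ v < h + t) ∨ (v < h ∧ v + n < h + t))) :=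
      Finset.filter_congr (fun v hv =>
        or_congr Iff.rfl (bv_char hh2 (Finset.mem_range.mp hv)))
    rw [hcongr]
    have hset : (range n).filter
        (fun v => v < t ∨ ((h ≤ v ∧ v < h + t) ∨ (v < h ∧ v + n < h + t))) =
        range t ∪ Finset.Ico h (h + t) := by
      ext a
      simp only [Finset.mem_filter, Finset.mem_range, Finset.mem_union, Finset.mem_Ico]
      omega
    rw [hset, Finset.card_union_of_disjoint (by
      simp only [Finset.disjoint_left, Finset.mem_range, Finset.mem_Ico]
      intro a h1 h2
      omega), Finset.card_range, Nat.card_Ico]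
    omega
  · intro v hv ⟨hav, hbv⟩
    rw [bv_char hh2 hv] at hbv
    omega

lemma count_overlap (hh2 : h < n) (hht : h ≤ t) (htn : t ≤ n) (hcov : n ≤ h + t) :
    ((range n).filter (fun v => v < t ∧ (v + (n-h)) % n < t)).card = 2*t - n
    ∧ ∀ v < n, (v < t ∨ (v + (n-h)) % n < t) := by
  constructor
  · have hcongr : (range n).filter (fun v => v < t ∧ (v + (n-h)) % n < t)
        = (range n).filter
          (fun v => v < t ∧ ((h ≤ v ∧ v < h + t) ∨ (v < h ∧ v + n < h + t))) :=
      Finset.filter_congr (fun v hv =>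
        and_congr Iff.rfl (bv_char hh2 (Finset.mem_range.mp hv)))
    rw [hcongr]
    have hset : (range n).filter
        (fun v => v < t ∧ ((h ≤ v ∧ v < h + t) ∨ (v < h ∧ v + n < h + t))) =
        Finset.Ico h t ∪ range (h + t - n) := by
      ext a
      simp only [Finset.mem_filter, Finset.mem_range, Finset.mem_union, Finset.mem_Ico]
      omega
    rw [hset, Finset.card_union_of_disjoint (by
      simp only [Finset.disjoint_left, Finset.mem_range, Finset.mem_Ico]
      intro a h1 h2
      omega), Finset.card_range, Nat.card_Ico]
    omega
  · intro v hv
    rw [bv_char hh2 hv]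
    omega


lemma main_disjoint (n m t h k r e : ℕ) (μ : Bool)
    (hm : 2*m < n) (hμ : μ = true → n % 2 = 0) (hh1 : 1 ≤ h) (hh2 : h < n)
    (hμn : μ = true → 2 ≤ n) (hn : 1 ≤ n)
    (Hd1 : 0 < t → m < h ∧ h < n - m)
    (Hd2 : μ = true → n % 2 = 0 ∧ 2 ≤ n ∧ (0 < t → h ≠ n/2 ∧ n - h ≠ n/2))
    (Hd3 : 2*h = n → t ≤ h ∧ h + t ≤ n ∧ μ = false)
    (hone : ∀ v : ℕ, v + 1 < n → 1 ∈ offs n m t h μ v)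
    (htn : t ≤ h) (hht : h + t ≤ n)
    (hk : k = 2*m + (if μ then 1 else 0)) (hrt : r = 2*t)
    (he : 2*e = n*(2*m + (if μ then 1 else 0)) + t + t) :
    ∃ G : SimpleGraph (Fin n), G.Connected ∧ Nat.card G.edgeSet = e ∧
      ((Finset.univ.filter fun v => (G.neighborSet v).ncard = k + 1)).card = r ∧
      ∀ v, (G.neighborSet v).ncard = k ∨ (G.neighborSet v).ncard = k + 1 := by
  have hcd := count_disjoint (t := t) hh2 htn hht
  have hchar : ∀ v : Fin n, ((graph n m t h μ hm hμ hh1 hh2).neighborSet v).ncard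
      = 2*m + (if μ then 1 else 0) + (if v.val < t then 1 else 0)
        + (if (v.val + (n-h)) % n < t then 1 else 0) :=
    fun v => (ncard_neighbor hm hμ hh1 hh2 hμn v).trans
      (card_offs hm hh1 hh2 Hd1 Hd2 Hd3 v.val v.isLt)
  refine ⟨graph n m t h μ hm hμ hh1 hh2,
    graph_connected hm hμ hh1 hh2 hn hone, ?_, ?_, ?_⟩
  · have hdeg : ∀ v : Fin n, (graph n m t h μ hm hμ hh1 hh2).degree v
        = #(offs n m t h μ v.val) :=
      fun v => card_neighborFinset hm hμ hh1 hh2 hμn v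
    have hs := (graph n m t h μ hm hμ hh1 hh2).sum_degrees_eq_twice_card_edges
    rw [Finset.sum_congr rfl (fun v _ => hdeg v),
      sum_card_offs hm hh1 hh2 Hd1 Hd2 Hd3 (by omega)] at hs
    have hcard : Nat.card (graph n m t h μ hm hμ hh1 hh2).edgeSet
        = (graph n m t h μ hm hμ hh1 hh2).edgeFinset.card := by
      rw [Nat.card_coe_set_eq, ← SimpleGraph.coe_edgeFinset (graph n m t h μ hm hμ hh1 hh2),
        Set.ncard_coe_finset]
    omega
  · have hcongr : (Finset.univ.filter
        fun v : Fin n => ((graph n m t h μ hm hμ hh1 hh2).neighborSet v).ncard = k + 1)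
        = Finset.univ.filter
          (fun v : Fin n => v.val < t ∨ (v.val + (n-h)) % n < t) := by
      refine Finset.filter_congr (fun v _ => ?_)
      rw [hchar v]
      have hd := hcd.2 v.val v.isLt
      have i1 : ((if v.val < t then 1 else 0) = 1 ∧ v.val < t)
          ∨ ((if v.val < t then 1 else 0) = 0 ∧ ¬(v.val < t)) := by
        split_ifs with hc
        exacts [Or.inl ⟨rfl, hc⟩, Or.inr ⟨rfl, hc⟩]
      have i2 : ((if (v.val + (n-h)) % n < t then 1 else 0) = 1 ∧ (v.val + (n-h)) % n < t)
          ∨ ((if (v.val + (n-h)) % n < t then 1 else 0) = 0 ∧ ¬((v.val + (n-h)) % n < t)) := by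
        split_ifs with hc
        exacts [Or.inl ⟨rfl, hc⟩, Or.inr ⟨rfl, hc⟩]
      omega
    rw [hcongr, card_filter_val n (fun w => w < t ∨ (w + (n-h)) % n < t), hcd.1]
    omega
  · intro v
    have hd := hcd.2 v.val v.isLt
    rw [hchar v]
    have i1 : ((if v.val < t then 1 else 0) = 1 ∧ v.val < t)
        ∨ ((if v.val < t then 1 else 0) = 0 ∧ ¬(v.val < t)) := by
      split_ifs with hc
      exacts [Or.inl ⟨rfl, hc⟩, Or.inr ⟨rfl, hc⟩]
    have i2 : ((if (v.val + (n-h)) % n < t then 1 else 0) = 1 ∧ (v.val + (n-h)) % n < t)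
        ∨ ((if (v.val + (n-h)) % n < t then 1 else 0) = 0 ∧ ¬((v.val + (n-h)) % n < t)) := by
      split_ifs with hc
      exacts [Or.inl ⟨rfl, hc⟩, Or.inr ⟨rfl, hc⟩]
    omega

lemma main_overlap (n m t h k r e : ℕ)
    (hm : 2*m < n) (hh1 : 1 ≤ h) (hh2 : h < n) (hn : 1 ≤ n)
    (Hd1 : 0 < t → m < h ∧ h < n - m)
    (Hd3 : 2*h = n → t ≤ h ∧ h + t ≤ n)
    (hone : ∀ v : ℕ, v + 1 < n → 1 ∈ offs n m t h false v)
    (hth : h ≤ t) (htn : t ≤ n) (hcov : n ≤ h + t)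
    (hk : k = 2*m + 1) (hrt : r + n = 2*t)
    (he : 2*e = n*(2*m) + t + t) :
    ∃ G : SimpleGraph (Fin n), G.Connected ∧ Nat.card G.edgeSet = e ∧
      ((Finset.univ.filter fun v => (G.neighborSet v).ncard = k + 1)).card = r ∧
      ∀ v, (G.neighborSet v).ncard = k ∨ (G.neighborSet v).ncard = k + 1 := by
  have hμ : (false : Bool) = true → n % 2 = 0 := by simp
  have hμn : (false : Bool) = true → 2 ≤ n := by simp
  have Hd2 : (false : Bool) = true → n % 2 = 0 ∧ 2 ≤ n ∧ (0 < t → h ≠ n/2 ∧ n - h ≠ n/2) := by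
    simp
  have Hd3' : 2*h = n → t ≤ h ∧ h + t ≤ n ∧ (false : Bool) = false :=
    fun c => ⟨(Hd3 c).1, (Hd3 c).2, rfl⟩
  have hz : (if (false : Bool) then 1 else 0) = 0 := rfl
  have hco := count_overlap (t := t) hh2 hth htn hcov
  have hchar : ∀ v : Fin n, ((graph n m t h false hm hμ hh1 hh2).neighborSet v).ncard
      = 2*m + (if (false : Bool) then 1 else 0) + (if v.val < t then 1 else 0)
        + (if (v.val + (n-h)) % n < t then 1 else 0) :=
    fun v => (ncard_neighbor hm hμ hh1 hh2 hμn v).trans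
      (card_offs hm hh1 hh2 Hd1 Hd2 Hd3' v.val v.isLt)
  refine ⟨graph n m t h false hm hμ hh1 hh2,
    graph_connected hm hμ hh1 hh2 hn hone, ?_, ?_, ?_⟩
  · have hdeg : ∀ v : Fin n, (graph n m t h false hm hμ hh1 hh2).degree v
        = #(offs n m t h false v.val) :=
      fun v => card_neighborFinset hm hμ hh1 hh2 hμn v
    have hs := (graph n m t h false hm hμ hh1 hh2).sum_degrees_eq_twice_card_edges
    rw [Finset.sum_congr rfl (fun v _ => hdeg v),
      sum_card_offs hm hh1 hh2 Hd1 Hd2 Hd3' (by omega)] at hs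
    have hcard : Nat.card (graph n m t h false hm hμ hh1 hh2).edgeSet
        = (graph n m t h false hm hμ hh1 hh2).edgeFinset.card := by
      rw [Nat.card_coe_set_eq, ← SimpleGraph.coe_edgeFinset (graph n m t h false hm hμ hh1 hh2),
        Set.ncard_coe_finset]
    rw [show (if (false : Bool) then 1 else 0) = 0 from rfl, Nat.add_zero] at hs
    omega
  · have hcongr : (Finset.univ.filter
        fun v : Fin n => ((graph n m t h false hm hμ hh1 hh2).neighborSet v).ncard = k + 1)
        = Finset.univ.filter
          (fun v : Fin n => v.val < t ∧ (v.val + (n-h)) % n < t) := by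
      refine Finset.filter_congr (fun v _ => ?_)
      rw [hchar v]
      have hd := hco.2 v.val v.isLt
      have i1 : ((if v.val < t then 1 else 0) = 1 ∧ v.val < t)
          ∨ ((if v.val < t then 1 else 0) = 0 ∧ ¬(v.val < t)) := by
        split_ifs with hc
        exacts [Or.inl ⟨rfl, hc⟩, Or.inr ⟨rfl, hc⟩]
      have i2 : ((if (v.val + (n-h)) % n < t then 1 else 0) = 1 ∧ (v.val + (n-h)) % n < t)
          ∨ ((if (v.val + (n-h)) % n < t then 1 else 0) = 0 ∧ ¬((v.val + (n-h)) % n < t)) := by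
        split_ifs with hc
        exacts [Or.inl ⟨rfl, hc⟩, Or.inr ⟨rfl, hc⟩]
      omega
    rw [hcongr, card_filter_val n (fun w => w < t ∧ (w + (n-h)) % n < t), hco.1]
    omega
  · intro v
    have hd := hco.2 v.val v.isLt
    rw [hchar v]
    have i1 : ((if v.val < t then 1 else 0) = 1 ∧ v.val < t)
        ∨ ((if v.val < t then 1 else 0) = 0 ∧ ¬(v.val < t)) := by
      split_ifs with hc
      exacts [Or.inl ⟨rfl, hc⟩, Or.inr ⟨rfl, hc⟩]
    have i2 : ((if (v.val + (n-h)) % n < t then 1 else 0) = 1 ∧ (v.val + (n-h)) % n < t)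
        ∨ ((if (v.val + (n-h)) % n < t then 1 else 0) = 0 ∧ ¬((v.val + (n-h)) % n < t)) := by
      split_ifs with hc
      exacts [Or.inl ⟨rfl, hc⟩, Or.inr ⟨rfl, hc⟩]
    omega

end AlmostReg

open Finset in
/-- Every almost regular degree sequence (with `r` vertices of degree `k + 1` and `n - r`
of degree `k`, where `2e = nk + r`, `0 ≤ r < n`, and `n - 1 ≤ e ≤ n(n-1)/2`) is realized
by a connected simple graph on `n` vertices with `e` edges. -/
theorem almost_regular_realization (n e k r : ℕ) (hn : 1 ≤ n)
    (h1 : n - 1 ≤ e) (h2 : e ≤ n * (n - 1) / 2)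
    (hdiv : 2 * e = n * k + r) (hr : r < n) :
    ∃ G : SimpleGraph (Fin n), G.Connected ∧ Nat.card G.edgeSet = e ∧
      (univ.filter fun v => (G.neighborSet v).ncard = k + 1).card = r ∧
      ∀ v, (G.neighborSet v).ncard = k ∨ (G.neighborSet v).ncard = k + 1 := by
  have h2' : 2 * e ≤ n * (n-1) := by
    have hd := Nat.div_mul_le_self (n*(n-1)) 2
    have hmm := Nat.mul_le_mul_right 2 h2
    omega
  by_cases hn1 : n = 1
  · subst hn1
    have he0 : e = 0 := by simpa using h2
    have hk0 : k = 0 ∧ r = 0 := by omega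
    refine ⟨⊥, ?_, ?_, ?_, ?_⟩
    · rw [SimpleGraph.connected_iff]
      exact ⟨fun u v => by rw [Subsingleton.elim u v], ⟨⟨0, by omega⟩⟩⟩
    · simp [SimpleGraph.edgeSet_bot, he0]
    · have hfe : (univ.filter fun v : Fin 1 =>
          ((⊥ : SimpleGraph (Fin 1)).neighborSet v).ncard = k + 1) = ∅ := by
        refine Finset.filter_eq_empty_iff.mpr (fun v _ => ?_)
        have hbot : (⊥ : SimpleGraph (Fin 1)).neighborSet v = ∅ := by
          ext w; simp [SimpleGraph.neighborSet]
        rw [hbot]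
        simp
      rw [hfe]
      simp [hk0.2]
    · intro v
      left
      have hbot : (⊥ : SimpleGraph (Fin 1)).neighborSet v = ∅ := by
        ext w; simp [SimpleGraph.neighborSet]
      rw [hbot]
      simp [hk0.1]
  · have hn2 : 2 ≤ n := by omega
    have hkn : k + 1 ≤ n := by
      have hmul : n * k ≤ n * (n-1) := by omega
      have := Nat.le_of_mul_le_mul_left hmul (by omega : 0 < n)
      omega
    have hk2 : 1 ≤ r → k + 2 ≤ n := by
      intro hr1
      have hlt : n * k < n * (n-1) := by omega
      have := Nat.lt_of_mul_lt_mul_left hlt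
      omega
    rcases Nat.eq_zero_or_pos k with hk0 | hkpos
    · exfalso
      subst hk0
      simp only [Nat.mul_zero, Nat.zero_add] at hdiv
      omega
    by_cases hk1 : k = 1
    · subst hk1
      apply AlmostReg.main_overlap n 0 (n-1) 1 1 r e
      · omega
      · omega
      · omega
      · omega
      · exact fun _ => ⟨by omega, by omega⟩
      · exact fun _ => ⟨by omega, by omega⟩
      · intro v hv
        rw [AlmostReg.mem_offs]
        exact Or.inr (Or.inr (Or.inr (Or.inl ⟨by omega, rfl⟩)))
      · omega
      · omega
      · omega
      · omega
      · omega
      · omega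
    · have hkge2 : 2 ≤ k := by omega
      by_cases hke : k % 2 = 0
      · -- k even
        have hk' : k = 2*(k/2) := by omega
        have h2k : n*k = 2*(n*(k/2)) := by
          calc n*k = n*(2*(k/2)) := by rw [← hk']
            _ = 2*(n*(k/2)) := by ring
        apply AlmostReg.main_disjoint n (k/2) (r/2) (n - n/2) k r e false
        · omega
        · simp
        · omega
        · omega
        · simp
        · omega
        · intro h0
          have := hk2 (by omega)
          constructor <;> omega
        · simp
        · intro hc
          refine ⟨by omega, by omega, rfl⟩
        · intro v hv
          rw [AlmostReg.mem_offs]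
          exact Or.inl ⟨by omega, by omega⟩
        · omega
        · omega
        · rw [show (if (false : Bool) then 1 else 0) = 0 from rfl]
          omega
        · omega
        · rw [show (if (false : Bool) then 1 else 0) = 0 from rfl, Nat.add_zero]
          have hrng : n*(2*(k/2)) = 2*(n*(k/2)) := by ring
          omega
      · -- k odd, k ≥ 3
        have hk3 : 3 ≤ k := by omega
        have hk' : k = 2*(k/2) + 1 := by omega
        have h2k : n*k = 2*(n*(k/2)) + n := by
          calc n*k = n*(2*(k/2)+1) := by rw [← hk']
            _ = 2*(n*(k/2)) + n := by ring
        by_cases hne : n % 2 = 0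
        · -- n even : matching construction
          apply AlmostReg.main_disjoint n (k/2) (r/2) (n/2 - 1) k r e true
          · omega
          · exact fun _ => hne
          · omega
          · omega
          · exact fun _ => by omega
          · omega
          · intro h0
            have := hk2 (by omega)
            constructor <;> omega
          · intro _
            exact ⟨hne, by omega, fun _ => ⟨by omega, by omega⟩⟩
          · intro hc
            exact absurd hc (by omega)
          · intro v hv
            rw [AlmostReg.mem_offs]
            exact Or.inl ⟨by omega, by omega⟩
          · omega
          · omega
          · rw [show (if (true : Bool) then 1 else 0) = 1 from rfl]
            omega
          · omega
          · rw [show (if (true : Bool) then 1 else 0) = 1 from rfl]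
            have hrng : n*(2*(k/2)+1) = 2*(n*(k/2)) + n := by ring
            omega
        · -- n odd : overlap construction
          have hk2' : k + 2 ≤ n := by omega
          apply AlmostReg.main_overlap n (k/2) ((n+r)/2) ((n-1)/2) k r e
          · omega
          · omega
          · omega
          · omega
          · intro h0
            constructor <;> omega
          · intro hc
            exact absurd hc (by omega)
          · intro v hv
            rw [AlmostReg.mem_offs]
            exact Or.inl ⟨by omega, by omega⟩
          · omega
          · omega
          · omega
          · omega
          · omega
          · have hrng : n*(2*(k/2)) = 2*(n*(k/2)) := by ring
            omega
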